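/- Conversely, in the setting of Lemma 3.1, if M⁺ is a model of T⁺ whose universe has cardinality β^{+(n+1)} and whose interpretation of U has cardinality β, then the L-reduct of M⁺ restricted to W_n^{M⁺} is a model of T of cardinality β^{+n} in which U is interpreted by a set of cardinality β. In particular, |W_i^{M⁺}| = β^{+i} for every i ≤ n. -/

import Mathlib

open FirstOrder Cardinal Set

/-- The interpretation of the unary predicate `U` in `X`. -/
def USet (L : FirstOrder.Language.{0,0}) (U : L.Relations 1) (X : Type) [L.Structure X] :
    Set X :=
  {x | Language.Structure.RelMap U ![x]}

/-- Axioms (2)–(7) of Lemma 3.1, stated semantically for a structure `X` in a language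
containing `U`, with a binary relation `lt` (for `<`), unary predicates `W 0, …, W n`,
a binary relation `Fneg` (for `F₋₁`) and ternary relations `Fi i` (for `F_i`, `i ≤ n`):
`lt` is a linear order; each `W i` is an initial segment of `W (i+1)` and `W n` is an
initial segment of the universe; `U ⊆ W n`; `Fneg` is the graph of a bijection from `U`
onto `W 0`; for `i < n` and `x ∈ W (i+1) \ W i`, `Fi i x` is the graph of a bijection from
`W i` onto the `lt`-predecessors of `x`; for `x ∉ W n`, `Fi n x` is the graph of a
bijection from `W n` onto the `lt`-predecessors of `x`. -/
structure PlusAxioms (L : FirstOrder.Language.{0,0}) (U : L.Relations 1) (n : ℕ)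
    (X : Type) [L.Structure X] (lt : X → X → Prop) (W : Fin (n + 1) → Set X)
    (Fneg : X → X → Prop) (Fi : Fin (n + 1) → X → X → X → Prop) : Prop where
  linear : IsLinearOrder X lt
  mono : ∀ i : Fin n, W i.castSucc ⊆ W i.succ
  initialSeg : ∀ i : Fin n, ∀ x ∈ W i.castSucc, ∀ y ∈ W i.succ, lt y x → y ∈ W i.castSucc
  lastInitial : ∀ x ∈ W (Fin.last n), ∀ y, lt y x → y ∈ W (Fin.last n)
  Usub : USet L U X ⊆ W (Fin.last n)
  Fneg_dom : ∀ x y, Fneg x y → x ∈ USet L U X ∧ y ∈ W 0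
  Fneg_fun : ∀ x ∈ USet L U X, ∃! y, Fneg x y
  Fneg_inv : ∀ y ∈ W 0, ∃! x, Fneg x y
  Fi_dom : ∀ i : Fin n, ∀ x ∈ W i.succ \ W i.castSucc, ∀ y z,
    Fi i.castSucc x y z → y ∈ W i.castSucc ∧ z ∈ W i.succ ∧ lt z x
  Fi_fun : ∀ i : Fin n, ∀ x ∈ W i.succ \ W i.castSucc, ∀ y ∈ W i.castSucc,
    ∃! z, Fi i.castSucc x y z
  Fi_inv : ∀ i : Fin n, ∀ x ∈ W i.succ \ W i.castSucc, ∀ z ∈ W i.succ, lt z x →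
    ∃! y, Fi i.castSucc x y z
  Fn_dom : ∀ x, x ∉ W (Fin.last n) → ∀ y z,
    Fi (Fin.last n) x y z → y ∈ W (Fin.last n) ∧ lt z x
  Fn_fun : ∀ x, x ∉ W (Fin.last n) → ∀ y ∈ W (Fin.last n), ∃! z, Fi (Fin.last n) x y z
  Fn_inv : ∀ x, x ∉ W (Fin.last n) → ∀ z, lt z x → ∃! y, Fi (Fin.last n) x y z

theorem keyA {Y : Type} (r : Y → Y → Prop) (htot : ∀ a b : Y, r a b ∨ r b a)
    (κ : Cardinal.{0}) (hκ : ℵ₀ ≤ κ) (h : ∀ x : Y, #{y : Y // r y x} ≤ κ) :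
    #Y ≤ Order.succ κ := by
  classical
  by_contra hY
  push_neg at hY
  haveI : Nonempty Y := by
    rw [← Cardinal.mk_ne_zero_iff]
    intro h0
    rw [h0] at hY
    exact absurd hY (by simp)
  set s : Y → Y → Prop := fun a b => r a b ∧ a ≠ b with hs
  let F : ∀ i : (Order.succ (Order.succ κ)).ord.ToType,
      (∀ j, j < i → Y) → Y := fun i rec =>
    if hex : ∃ y : Y, ∀ (j) (hj : j < i), s (rec j hj) y then hex.choose
    else Classical.arbitrary Y
  let g : (Order.succ (Order.succ κ)).ord.ToType → Y := IsWellFounded.fix (· < ·) F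
  have hgeq : ∀ i, g i = F i fun j _ => g j := fun i =>
    IsWellFounded.fix_eq (· < ·) F i
  by_cases hstuck : ∀ i, ∃ y : Y, ∀ (j) (_ : j < i), s (g j) y
  · -- never stuck : g is strictly increasing; some element has too many predecessors
    have hmono : ∀ i j, j < i → s (g j) (g i) := by
      intro i j hj
      have hx := hstuck i
      have : g i = hx.choose := by
        rw [hgeq i]
        exact dif_pos hx
      rw [this]
      exact hx.choose_spec j hj
    have hlt : (Order.succ κ).ord <
        @Ordinal.type (Order.succ (Order.succ κ)).ord.ToType (· < ·) isWellOrder_lt := by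
      rw [Ordinal.type_toType]
      exact Cardinal.ord_lt_ord.2 (Order.lt_succ _)
    set i₀ := @Ordinal.enum (Order.succ (Order.succ κ)).ord.ToType (· < ·) isWellOrder_lt
      ⟨(Order.succ κ).ord, hlt⟩ with hi₀
    have hcard : #{j // j < i₀} = Order.succ κ := by
      have hct := @Ordinal.card_typein (Order.succ (Order.succ κ)).ord.ToType _ isWellOrder_lt i₀
      rw [← hct, hi₀, @Ordinal.typein_enum _ _ isWellOrder_lt _ hlt, Cardinal.card_ord]
    have hemb : Order.succ κ ≤ #{y : Y // r y (g i₀)} := by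
      rw [← hcard]
      refine ⟨⟨fun j => ⟨g j.1, (hmono i₀ j.1 j.2).1⟩, ?_⟩⟩
      intro j j' hjj'
      simp only [Subtype.mk.injEq] at hjj'
      by_contra hne
      have hne' : j.1 ≠ j'.1 := fun hh => hne (Subtype.ext hh)
      rcases lt_or_gt_of_ne hne' with hlt' | hlt'
      · exact (hmono j'.1 j.1 hlt').2 hjj'
      · exact (hmono j.1 j'.1 hlt').2 hjj'.symm
    exact absurd (hemb.trans (h (g i₀))) (not_le.2 (Order.lt_succ κ))
  · -- stuck at some i : Y is covered by few small sets
    push_neg at hstuck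
    obtain ⟨i, hi⟩ := hstuck
    have hcover : (⋃ j : {j // j < i}, ({y : Y | r y (g j.1)} ∪ {g j.1})) = Set.univ := by
      apply Set.eq_univ_iff_forall.2
      intro y
      obtain ⟨j, hj, hnsy⟩ := hi y
      refine Set.mem_iUnion.2 ⟨⟨j, hj⟩, ?_⟩
      rw [hs] at hnsy
      simp only [not_and, not_ne_iff] at hnsy
      by_cases hr : r (g j) y
      · exact Or.inr (by simp [hnsy hr])
      · exact Or.inl ((htot y (g j)).resolve_right hr)
    have h1 : #Y ≤ #{j // j < i} * κ := by
      calc #Y = #(⋃ j : {j // j < i}, ({y : Y | r y (g j.1)} ∪ {g j.1})) := by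
                rw [hcover, Cardinal.mk_univ]
        _ ≤ Cardinal.sum fun j : {j // j < i} => #(({y : Y | r y (g j.1)} ∪ {g j.1} : Set Y)) :=
                Cardinal.mk_iUnion_le_sum_mk
        _ ≤ Cardinal.sum fun _ : {j // j < i} => κ := by
                apply Cardinal.sum_le_sum
                intro j
                calc #(({y : Y | r y (g j.1)} ∪ {g j.1} : Set Y))
                    = #((insert (g j.1) {y : Y | r y (g j.1)} : Set Y)) := by
                      rw [Set.union_singleton]
                  _ ≤ #{y : Y | r y (g j.1)} + 1 := Cardinal.mk_insert_le
                  _ ≤ κ + 1 := by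
                      exact add_le_add_left (h (g j.1)) 1
                  _ = κ := Cardinal.add_one_of_aleph0_le hκ
        _ = #{j // j < i} * κ := Cardinal.sum_const' _ _
    have h2 : #{j // j < i} ≤ Order.succ κ := by
      have h3 := Cardinal.card_typein_toType_lt (Order.succ (Order.succ κ)) i
      have h4 := @Ordinal.card_typein (Order.succ (Order.succ κ)).ord.ToType _ isWellOrder_lt i
      rw [← h4]
      exact Order.lt_succ_iff.1 h3
    have h5 : #Y ≤ Order.succ κ := by
      refine h1.trans ?_
      calc #{j // j < i} * κ ≤ Order.succ κ * κ := by
            exact mul_le_mul_left h2 κ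
        _ = Order.succ κ := by
            rw [Cardinal.mul_eq_max (hκ.trans (Order.le_succ κ)) hκ]
            exact max_eq_left (Order.le_succ κ)
    exact absurd h5 (not_le.2 hY)

/-- If `R` is the graph of a bijection between `α` and `β`, then `#α = #β`. -/
theorem card_eq_of_rel {α β : Type} (R : α → β → Prop)
    (hf : ∀ a, ∃! b, R a b) (hg : ∀ b, ∃! a, R a b) : #α = #β := by
  have f : ∀ a, {b // R a b} := fun a => ⟨(hf a).choose, (hf a).choose_spec.1⟩
  refine Cardinal.mk_congr (Equiv.ofBijective (fun a => (f a).1) ⟨?_, ?_⟩)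
  · intro a a' haa'
    simp only at haa'
    exact (hg (f a).1).unique (f a).2 (by rw [haa']; exact (f a').2)
  · intro b
    refine ⟨(hg b).choose, ?_⟩
    exact ((hf (hg b).choose).unique (f (hg b).choose).2 (hg b).choose_spec.1)

/-- the converse direction of Lemma 3.1: if `M⁺` is a model of `T⁺`
(axioms (2)–(7) together with the relativization of `T` to `W n`, encoded by a
substructure `S` with underlying set `W n` modelling `T`) whose universe has cardinality
`β^{+(n+1)}` and in which `U` has cardinality `β`, then `|W i| = β^{+i}` for every
`i ≤ n`; in particular the `L`-structure on `W n` is a model of `T` of cardinality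
`β^{+n}` in which `U` is interpreted by a set of cardinality `β`. -/
theorem stmt7 (L : FirstOrder.Language.{0,0}) (U : L.Relations 1) (T : L.Theory)
    (n : ℕ) (hn : 1 ≤ n) (β : Cardinal.{0}) (hβ : ℵ₀ ≤ β)
    (X : Type) [L.Structure X] (lt : X → X → Prop) (W : Fin (n + 1) → Set X)
    (Fneg : X → X → Prop) (Fi : Fin (n + 1) → X → X → X → Prop)
    (ax : PlusAxioms L U n X lt W Fneg Fi)
    (S : L.Substructure X) (hSW : (S : Set X) = W (Fin.last n)) (hST : T.Model S)
    (hX : #X = (Order.succ)^[n + 1] β) (hU : #(USet L U X) = β) :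
    (∀ i : Fin (n + 1), #(W i) = (Order.succ)^[(i : ℕ)] β) ∧
      #S = (Order.succ)^[n] β ∧ #{x : S | (x : X) ∈ USet L U X} = β := by
  classical
  obtain ⟨lin, mono, initialSeg, lastInitial, Usub, Fneg_dom, Fneg_fun, Fneg_inv,
    Fi_dom, Fi_fun, Fi_inv, Fn_dom, Fn_fun, Fn_inv⟩ := ax
  have htot : ∀ a b : X, lt a b ∨ lt b a := fun a b => lin.toTotal.total a b
  -- the `W i` form a chain
  have hsub0 : ∀ i : Fin (n + 1), W 0 ⊆ W i := by
    intro i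
    induction i using Fin.induction with
    | zero => exact subset_rfl
    | succ i ih => exact ih.trans (mono i)
  -- `|W 0| = β` via the bijection `Fneg`
  have h0 : #(W 0) = β := by
    rw [← hU]
    symm
    apply card_eq_of_rel (fun (a : (USet L U X)) (b : (W 0)) => Fneg a.1 b.1)
    · intro a
      obtain ⟨y, hy, huniq⟩ := Fneg_fun a.1 a.2
      exact ⟨⟨y, (Fneg_dom a.1 y hy).2⟩, hy, fun b hb => Subtype.ext (huniq b.1 hb)⟩
    · intro b
      obtain ⟨x, hx, huniq⟩ := Fneg_inv b.1 b.2
      exact ⟨⟨x, (Fneg_dom x b.1 hx).1⟩, hx, fun a ha => Subtype.ext (huniq a.1 ha)⟩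
  have hinf : ∀ i : Fin (n + 1), ℵ₀ ≤ #(W i) := fun i =>
    (hβ.trans_eq h0.symm).trans (Cardinal.mk_le_mk_of_subset (hsub0 i))
  -- step bound : `|W (i+1)| ≤ |W i|⁺`
  have hstep : ∀ i : Fin n, #(W i.succ) ≤ Order.succ (#(W i.castSucc)) := by
    intro i
    apply keyA (fun a b : (W i.succ) => lt a.1 b.1)
      (fun a b => htot a.1 b.1) _ (hinf i.castSucc)
    intro b
    by_cases hb : b.1 ∈ W i.castSucc
    · refine Cardinal.mk_le_of_injective
        (f := fun a : {a : (W i.succ) // lt a.1 b.1} =>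
          (⟨a.1.1, initialSeg i b.1 hb a.1.1 a.1.2 a.2⟩ : (W i.castSucc))) ?_
      intro a a' haa'
      simp only [Subtype.mk.injEq] at haa'
      exact Subtype.ext (Subtype.ext haa')
    · have hbmem : b.1 ∈ W i.succ \ W i.castSucc := ⟨b.2, hb⟩
      have hcard := card_eq_of_rel
        (fun (y : (W i.castSucc)) (z : {a : (W i.succ) // lt a.1 b.1}) =>
          Fi i.castSucc b.1 y.1 z.1.1) ?_ ?_
      · exact le_of_eq hcard.symm
      · intro y
        obtain ⟨z, hz, huniq⟩ := Fi_fun i b.1 hbmem y.1 y.2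
        obtain ⟨-, hz1, hz2⟩ := Fi_dom i b.1 hbmem y.1 z hz
        exact ⟨⟨⟨z, hz1⟩, hz2⟩, hz,
          fun z' hz' => Subtype.ext (Subtype.ext (huniq z'.1.1 hz'))⟩
      · intro z
        obtain ⟨y, hy, huniq⟩ := Fi_inv i b.1 hbmem z.1.1 z.1.2 z.2
        exact ⟨⟨y, (Fi_dom i b.1 hbmem y z.1.1 hy).1⟩, hy,
          fun y' hy' => Subtype.ext (huniq y'.1 hy')⟩
  -- top bound : `|X| ≤ |W n|⁺`
  have htop : #X ≤ Order.succ (#(W (Fin.last n))) := by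
    apply keyA lt htot _ (hinf (Fin.last n))
    intro x
    by_cases hx : x ∈ W (Fin.last n)
    · refine Cardinal.mk_le_of_injective
        (f := fun y : {y : X // lt y x} =>
          (⟨y.1, lastInitial x hx y.1 y.2⟩ : (W (Fin.last n)))) ?_
      intro a a' haa'
      simp only [Subtype.mk.injEq] at haa'
      exact Subtype.ext haa'
    · have hcard := card_eq_of_rel
        (fun (y : (W (Fin.last n))) (z : {y : X // lt y x}) =>
          Fi (Fin.last n) x y.1 z.1) ?_ ?_
      · exact le_of_eq hcard.symm
      · intro y
        obtain ⟨z, hz, huniq⟩ := Fn_fun x hx y.1 y.2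
        exact ⟨⟨z, (Fn_dom x hx y.1 z hz).2⟩, hz,
          fun z' hz' => Subtype.ext (huniq z'.1 hz')⟩
      · intro z
        obtain ⟨y, hy, huniq⟩ := Fn_inv x hx z.1 z.2
        exact ⟨⟨y, (Fn_dom x hx y z.1 hy).1⟩, hy,
          fun y' hy' => Subtype.ext (huniq y'.1 hy')⟩
  -- upper bounds
  have hupper : ∀ i : Fin (n + 1), #(W i) ≤ (Order.succ)^[(i : ℕ)] β := by
    intro i
    induction i using Fin.induction with
    | zero => simpa using le_of_eq h0
    | succ i ih =>
      refine (hstep i).trans ?_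
      have := Order.succ_le_succ ih
      simpa [Fin.val_succ, Function.iterate_succ_apply'] using this
  -- lower bound at the top
  have hlow_last : (Order.succ)^[n] β ≤ #(W (Fin.last n)) := by
    by_contra hcon
    push_neg at hcon
    have h1 : Order.succ (#(W (Fin.last n))) ≤ (Order.succ)^[n] β :=
      Order.succ_le_of_lt hcon
    have h2 : (Order.succ)^[n + 1] β ≤ Order.succ (#(W (Fin.last n))) := hX ▸ htop
    have h4 : (Order.succ)^[n + 1] β ≤ (Order.succ)^[n] β := h2.trans h1
    have hlt : (Order.succ)^[n] β < (Order.succ)^[n + 1] β := by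
      rw [Function.iterate_succ_apply']
      exact Order.lt_succ _
    exact absurd h4 (not_le.2 hlt)
  -- downward induction
  have hkey : ∀ k : ℕ, ∀ i : Fin (n + 1), (i : ℕ) + k = n →
      #(W i) = (Order.succ)^[(i : ℕ)] β := by
    intro k
    induction k with
    | zero =>
      intro i hik
      have hi : i = Fin.last n := Fin.ext (by simpa using hik)
      subst hi
      simp only [Fin.val_last]
      exact le_antisymm (by simpa using hupper (Fin.last n)) hlow_last
    | succ k ih =>
      intro i hik
      have hi : (i : ℕ) < n := by omega
      have hjs : ((⟨(i : ℕ), hi⟩ : Fin n).succ : ℕ) + k = n := by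
        simp only [Fin.val_succ]
        omega
      have h1 := ih (⟨(i : ℕ), hi⟩ : Fin n).succ hjs
      have h2 := hstep (⟨(i : ℕ), hi⟩ : Fin n)
      have hjc : (⟨(i : ℕ), hi⟩ : Fin n).castSucc = i := Fin.ext rfl
      rw [hjc] at h2
      refine le_antisymm (hupper i) ?_
      by_contra hcon
      push_neg at hcon
      have h3 : Order.succ (#(W i)) ≤ (Order.succ)^[(i : ℕ)] β :=
        Order.succ_le_of_lt hcon
      have h4 : (Order.succ)^[(i : ℕ) + 1] β ≤ (Order.succ)^[(i : ℕ)] β := by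
        calc (Order.succ)^[(i : ℕ) + 1] β
            = #(W (⟨(i : ℕ), hi⟩ : Fin n).succ) := by rw [h1, Fin.val_succ]
          _ ≤ Order.succ (#(W i)) := h2
          _ ≤ _ := h3
      have hlt : (Order.succ)^[(i : ℕ)] β < (Order.succ)^[(i : ℕ) + 1] β := by
        rw [Function.iterate_succ_apply']
        exact Order.lt_succ _
      exact absurd h4 (not_le.2 hlt)
  have hWi : ∀ i : Fin (n + 1), #(W i) = (Order.succ)^[(i : ℕ)] β := by
    intro i
    exact hkey (n - (i : ℕ)) i (by omega)
  refine ⟨hWi, ?_, ?_⟩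
  · have hSeq : #S = #(W (Fin.last n)) := Cardinal.mk_congr (Equiv.setCongr hSW)
    rw [hSeq]
    simpa using hWi (Fin.last n)
  · rw [← hU]
    refine Cardinal.mk_congr ?_
    exact
      { toFun := fun x => ⟨x.1.1, x.2⟩
        invFun := fun u => ⟨⟨u.1, by
          have hmem : (u : X) ∈ (S : Set X) := by rw [hSW]; exact Usub u.2
          exact hmem⟩, u.2⟩
        left_inv := fun x => Subtype.ext (Subtype.ext rfl)
        right_inv := fun u => rfl }
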